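/- In G(de,e,2) with d ≥ 3, e ≥ 2, if (sr)^k ∈ H = ⟨s,t⟩ for some 0 ≤ k < e, where s = (-1,1 | (1 2)), r = (0,0 | (1 2)), t = (e,0 | id), then k = 0. -/

import Mathlib

/-- The wreath product `ZMod m ≀ Sₙ`: elements `(a | σ)` with `a : Fin n → ZMod m`
and `σ` a permutation of `{1,…,n}` (i.e. of `Fin n`). -/
structure W (m n : ℕ) : Type where
  a : Fin n → ZMod m
  p : Equiv.Perm (Fin n)

namespace W

lemma ext' {m n : ℕ} {x y : W m n} (h1 : x.a = y.a) (h2 : x.p = y.p) : x = y := by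
  cases x; cases y; cases h1; cases h2; rfl

instance (m n : ℕ) : Mul (W m n) :=
  ⟨fun x y => ⟨fun i => x.a i + y.a (x.p i), y.p * x.p⟩⟩

instance (m n : ℕ) : One (W m n) := ⟨⟨0, 1⟩⟩

instance (m n : ℕ) : Inv (W m n) :=
  ⟨fun x => ⟨fun i => -(x.a (x.p.symm i)), x.p⁻¹⟩⟩

lemma mul_def {m n : ℕ} (x y : W m n) :
    x * y = ⟨fun i => x.a i + y.a (x.p i), y.p * x.p⟩ := rfl

lemma one_def {m n : ℕ} : (1 : W m n) = ⟨0, 1⟩ := rfl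

lemma inv_def {m n : ℕ} (x : W m n) :
    x⁻¹ = ⟨fun i => -(x.a (x.p.symm i)), x.p⁻¹⟩ := rfl

/-- The wreath product group structure, with multiplication
`(a | σ)(b | τ) = (aᵢ + b_{σ(i)} | στ)` (where `στ` means: apply `σ` first). -/
instance (m n : ℕ) : Group (W m n) where
  mul_assoc x y z := by
    refine ext' (funext fun i => ?_) ?_
    · show (x.a i + y.a (x.p i)) + z.a ((y.p * x.p) i)
        = x.a i + (y.a (x.p i) + z.a (y.p (x.p i)))
      simp [Equiv.Perm.mul_apply, add_assoc]
    · show (z.p * (y.p * x.p)) = (z.p * y.p) * x.p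
      exact (mul_assoc _ _ _).symm
  one_mul x := by
    refine ext' (funext fun i => ?_) ?_
    · show 0 + x.a ((1 : Equiv.Perm (Fin _)) i) = x.a i; simp
    · show x.p * 1 = x.p; simp
  mul_one x := by
    refine ext' (funext fun i => ?_) ?_
    · show x.a i + 0 = x.a i; simp
    · show 1 * x.p = x.p; simp
  inv_mul_cancel x := by
    refine ext' (funext fun i => ?_) ?_
    · simp [mul_def, inv_def, one_def, Equiv.Perm.inv_def]
    · show x.p * x.p⁻¹ = 1; exact mul_inv_cancel _

end W

/-- The subgroup of `ZMod m ≀ Sₙ` of elements whose diagonal entries sum to `0 mod e`.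
For `m = d*e` this is the imprimitive complex reflection group `G(de,e,n)`. -/
def Gsub (m e n : ℕ) (h : e ∣ m) : Subgroup (W m n) where
  carrier := {x | ZMod.castHom h (ZMod e) (∑ i, x.a i) = 0}
  one_mem' := by simp [W.one_def]
  mul_mem' := by
    intro x y hx hy
    show ZMod.castHom h (ZMod e) (∑ i, (x.a i + y.a (x.p i))) = 0
    rw [Finset.sum_add_distrib, Equiv.sum_comp x.p y.a, map_add]
    rw [Set.mem_setOf_eq] at hx hy
    rw [hx, hy, add_zero]
  inv_mem' := by
    intro x hx
    show ZMod.castHom h (ZMod e) (∑ i, -(x.a (x.p.symm i))) = 0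
    rw [Finset.sum_neg_distrib, Equiv.sum_comp x.p.symm x.a, map_neg]
    rw [Set.mem_setOf_eq] at hx
    rw [hx, neg_zero]

lemma mem_Gsub {m e n : ℕ} (h : e ∣ m) (x : W m n) :
    x ∈ Gsub m e n h ↔ ZMod.castHom h (ZMod e) (∑ i, x.a i) = 0 := Iff.rfl

/-- The imprimitive complex reflection group `G(de,e,n)`. -/
abbrev Gde (d e n : ℕ) : Subgroup (W (d * e) n) := Gsub (d * e) e n (dvd_mul_left e d)

/-- A Hamiltonian cycle in the (undirected, right) Cayley graph `Γ(G,S)`,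
encoded as the list of edge labels (from `S ∪ S⁻¹`) along the cycle starting at `1`:
the partial products visit every element of `G` exactly once and the
total product returns to `1`. -/
def IsHamCycle {G : Type*} [Group G] (S : Set G) (l : List G) : Prop :=
  (∀ x ∈ l, x ∈ S ∨ x⁻¹ ∈ S) ∧ l.prod = 1 ∧ l.length = Nat.card G ∧
    ((List.range l.length).map fun k => (l.take k).prod).Nodup


/-- Componentwise reduction `W (d*e) 2 →* W e 2`. -/
def redHom (d e : ℕ) : W (d * e) 2 →* W e 2 where
  toFun x := ⟨fun i => ZMod.castHom (dvd_mul_left e d) (ZMod e) (x.a i), x.p⟩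
  map_one' := by
    refine W.ext' (funext fun i => ?_) rfl
    simp [W.one_def]
  map_mul' x y := by
    refine W.ext' (funext fun i => ?_) rfl
    exact map_add (ZMod.castHom (dvd_mul_left e d) (ZMod e)) _ _

lemma pow_triv_perm {m : ℕ} (v : Fin 2 → ZMod m) (k : ℕ) :
    (⟨v, 1⟩ : W m 2) ^ k = ⟨fun i => k • v i, 1⟩ := by
  induction k with
  | zero => exact W.ext' (funext fun i => by simp [W.one_def]) rfl
  | succ n ih =>
    rw [pow_succ, ih, W.mul_def]
    refine W.ext' (funext fun i => ?_) (by simp)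
    show n • v i + v ((1 : Equiv.Perm (Fin 2)) i) = (n + 1) • v i
    simp only [Equiv.Perm.one_apply, add_nsmul, one_nsmul]

/-- from Lemma 4.4. In `G(de,e,2)` with `d ≥ 3`, `e ≥ 2`, if
`(sr)^k ∈ H = ⟨s,t⟩` for some `0 ≤ k < e`, where `s = (-1,1 | (1 2))`,
`r = (0,0 | (1 2))`, `t = (e,0 | id)`, then `k = 0`. -/
theorem stmt14 (d e : ℕ) (hd : 3 ≤ d) (he : 2 ≤ e)
    (s t r : Gde d e 2)
    (hs : (s : W (d * e) 2) = ⟨![-1, 1], Equiv.swap 0 1⟩)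
    (ht : (t : W (d * e) 2) = ⟨![(e : ZMod (d * e)), 0], 1⟩)
    (hr : (r : W (d * e) 2) = ⟨![0, 0], Equiv.swap 0 1⟩)
    (H : Subgroup (Gde d e 2)) (hH : H = Subgroup.closure {s, t}) :
    ∀ k < e, (s * r) ^ k ∈ H → k = 0 := by
  intro k hk hmem
  haveI : NeZero e := ⟨by omega⟩
  -- the composite hom from the subgroup to W e 2
  set f : Gde d e 2 →* W e 2 := (redHom d e).comp (Gde d e 2).subtype with hf
  -- f t = 1
  have hft : f t = 1 := by
    refine W.ext' (funext fun i => ?_) ?_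
    · show ZMod.castHom (dvd_mul_left e d) (ZMod e) ((t : W (d*e) 2).a i) = (1 : W e 2).a i
      rw [ht]
      fin_cases i <;> simp [W.one_def]
    · show (t : W (d*e) 2).p = 1
      rw [ht]
  -- f s
  have hfs : f s = ⟨![-1, 1], Equiv.swap 0 1⟩ := by
    refine W.ext' (funext fun i => ?_) ?_
    · show ZMod.castHom (dvd_mul_left e d) (ZMod e) ((s : W (d*e) 2).a i) = _
      rw [hs]
      fin_cases i <;> simp [-ZMod.castHom_apply, map_neg, map_one]
    · show (s : W (d*e) 2).p = _
      rw [hs]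
  -- f s has order 2
  have hfs2 : f s * f s = 1 := by
    rw [hfs, W.mul_def]
    refine W.ext' (funext fun i => ?_) ?_
    · show (![(-1 : ZMod e), 1]) i + (![(-1 : ZMod e), 1]) (Equiv.swap 0 1 i)
        = (1 : W e 2).a i
      fin_cases i <;> simp [W.one_def]
    · show Equiv.swap 0 1 * Equiv.swap 0 1 = 1
      simp
  -- f of elements of H lies in zpowers (f s)
  have hmap : f ((s * r) ^ k) ∈ Subgroup.zpowers (f s) := by
    have h1 : f ((s * r) ^ k) ∈ H.map f := ⟨_, hmem, rfl⟩
    rw [hH, MonoidHom.map_closure] at h1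
    have h2 : Subgroup.closure (f '' {s, t}) ≤ Subgroup.zpowers (f s) := by
      rw [Subgroup.closure_le]
      rintro x ⟨y, hy, rfl⟩
      rcases hy with rfl | rfl
      · exact ⟨1, by simp⟩
      · rw [hft]; exact ⟨0, by simp⟩
    exact h2 h1
  -- compute f ((s*r)^k)
  have hsr : ((s * r : Gde d e 2) : W (d*e) 2) = ⟨![-1, 1], 1⟩ := by
    show (s : W (d*e) 2) * (r : W (d*e) 2) = _
    rw [hs, hr, W.mul_def]
    refine W.ext' (funext fun i => ?_) (by simp)
    fin_cases i <;> simp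
  have hcomp : f ((s * r) ^ k) = ⟨fun i => k • (![(-1 : ZMod e), 1]) i, 1⟩ := by
    have : f ((s * r) ^ k) = (f (s * r)) ^ k := map_pow f _ k
    rw [this]
    have hfsr : f (s * r) = ⟨![-1, 1], 1⟩ := by
      refine W.ext' (funext fun i => ?_) ?_
      · show ZMod.castHom (dvd_mul_left e d) (ZMod e) (((s*r : Gde d e 2) : W (d*e) 2).a i) = _
        rw [hsr]
        fin_cases i <;> simp [-ZMod.castHom_apply, map_neg, map_one]
      · show ((s*r : Gde d e 2) : W (d*e) 2).p = 1
        rw [hsr]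
    rw [hfsr, pow_triv_perm]
  -- f ((s*r)^k) is (f s)^n; since perms differ, it must be 1
  obtain ⟨n, hn'⟩ := hmap
  have hn : f s ^ n = f ((s * r) ^ k) := hn'
  have h2 : (f s) ^ (2 : ℤ) = 1 := by rw [zpow_two]; exact hfs2
  have heq1 : f ((s * r) ^ k) = 1 := by
    rcases Int.even_or_odd n with ⟨m, hm⟩ | ⟨m, hm⟩
    · rw [← hn, hm, ← two_mul, zpow_mul, h2, one_zpow]
    · exfalso
      have : f s ^ n = f s := by
        rw [hm, zpow_add, zpow_one, zpow_mul, h2, one_zpow, one_mul]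
      rw [this] at hn
      have hp := congrArg W.p hn
      rw [hfs, hcomp] at hp
      have h0 := congrArg (fun σ : Equiv.Perm (Fin 2) => σ 0) hp
      simp [Equiv.swap_apply_left] at h0
  -- conclude
  rw [hcomp] at heq1
  have ha := congrArg W.a heq1
  have h1 : k • ((![(-1 : ZMod e), 1]) 1) = (1 : W e 2).a 1 := by
    rw [← ha]
  rw [W.one_def] at h1
  simp at h1
  have : e ∣ k := (ZMod.natCast_eq_zero_iff _ _).mp h1
  exact Nat.eq_zero_of_dvd_of_lt this hk
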